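/- Let 0 < a < b, set r = a/b, let M ≥ 0, and let K : [r,1] → ℝ be continuous on [r,1] and differentiable on (r,1) with K'(θ) ≤ −M for all θ ∈ (r,1). Then b² ∫_r^1 (K(θ) − K(1)) dθ ≥ (M/2)(b − a)². -/
import Mathlib


open MeasureTheory Set Filter Topology

/-- If K' ≤ -M on (r,1), r = a/b, then
b² ∫_r^1 (K(θ) - K(1)) dθ ≥ (M/2)(b-a)². -/
theorem kernel_integral_lower_bound
    (a b r M : ℝ) (ha : 0 < a) (hab : a < b) (hr : r = a / b) (hM : 0 ≤ M)
    (K K' : ℝ → ℝ)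
    (hKcont : ContinuousOn K (Icc r 1))
    (hK' : ∀ θ ∈ Ioo r 1, HasDerivAt K (K' θ) θ)
    (hK'le : ∀ θ ∈ Ioo r 1, K' θ ≤ -M) :
    M / 2 * (b - a) ^ 2 ≤ b ^ 2 * ∫ θ in r..1, (K θ - K 1) := by
  have hb : (0:ℝ) < b := ha.trans hab
  have hr0 : 0 < r := by rw [hr]; positivity
  have hr1 : r < 1 := by rw [hr]; exact (div_lt_one hb).mpr hab
  have hganti : AntitoneOn (fun θ => K θ + M * θ) (Icc r 1) := by
    apply antitoneOn_of_deriv_nonpos (convex_Icc r 1)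
    · exact hKcont.add (continuousOn_const.mul continuousOn_id)
    · intro x hx
      rw [interior_Icc] at hx
      exact ((hK' x hx).add ((hasDerivAt_id x).const_mul M)).differentiableAt.differentiableWithinAt
    · intro x hx
      rw [interior_Icc] at hx
      have hd : HasDerivAt (fun θ => K θ + M * θ) (K' x + M * 1) x :=
        (hK' x hx).add ((hasDerivAt_id x).const_mul M)
      rw [hd.deriv]
      have := hK'le x hx
      linarith
  have key : ∀ θ ∈ Icc r 1, M * (1 - θ) ≤ K θ - K 1 := by
    intro θ hθ
    have := hganti hθ (right_mem_Icc.mpr hr1.le) hθ.2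
    simp only [] at this
    linarith
  have hint1 : IntervalIntegrable (fun θ => M * (1 - θ)) volume r 1 :=
    Continuous.intervalIntegrable (by continuity) r 1
  have hint2 : IntervalIntegrable (fun θ => K θ - K 1) volume r 1 :=
    ContinuousOn.intervalIntegrable (by rw [uIcc_of_le hr1.le]; exact hKcont.sub continuousOn_const)
  have hmono := intervalIntegral.integral_mono_on hr1.le hint1 hint2
    (fun θ hθ => key θ hθ)
  have hcalc : ∫ θ in r..1, M * (1 - θ) = M * (1 - r) ^ 2 / 2 := by
    have h1 : ∀ θ : ℝ, M * (1 - θ) = M - M * θ := fun θ => by ring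
    simp only [h1]
    rw [intervalIntegral.integral_sub intervalIntegrable_const
      (Continuous.intervalIntegrable (by continuity) r 1),
      intervalIntegral.integral_const_mul, integral_id]
    simp
    ring
  rw [hcalc] at hmono
  have hba : b * (1 - r) = b - a := by rw [hr]; field_simp
  have h2 : b ^ 2 * (1 - r) ^ 2 = (b - a) ^ 2 := by rw [← hba]; ring
  nlinarith [mul_le_mul_of_nonneg_left hmono (sq_nonneg b)]
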